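/- Let k be a commutative Noetherian ring of characteristic zero, let w_1, …, w_m be positive integers (weights, assigning weighted degree Σ w_i e_i to the monomial x^e), let D be a positive integer, and let V be a k-submodule of the weighted-homogeneous degree-D part of k[x_1, …, x_m]. For a prime p of k with residue field κ(p), let V_p be the κ(p)-span of the image of V in κ(p)[x_1, …, x_m]. Define λ(p) to be the κ(p)-dimension of the space of κ(p)-linear derivations ∂ of κ(p)[x_1, …, x_m] such that, for every j, ∂(x_j) is a κ(p)-linear combination of monomials of weighted degree strictly less than w_j, and ∂(f) = 0 for every f ∈ V_p. Then p ↦ λ(p) is upper semicontinuous on Spec k: for every integer ℓ, the set {p : λ(p) ≥ ℓ} is Zariski-closed. (Paper's Fact V.i: upper semicontinuity of the dimension of the space of negative-weight vector fields annihilating V.) -/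

import Mathlib

/-- The residue field of a commutative ring at a point of its prime spectrum. -/
noncomputable abbrev ResidueFieldAt {k : Type*} [CommRing k] (p : PrimeSpectrum k) : Type _ :=
  IsLocalRing.ResidueField (Localization.AtPrime p.asIdeal)

/-- The canonical map from a ring to its residue field at a prime. -/
noncomputable def residueMapAt {k : Type*} [CommRing k] (p : PrimeSpectrum k) :
    k →+* ResidueFieldAt p :=
  (IsLocalRing.residue (Localization.AtPrime p.asIdeal)).comp
    (algebraMap k (Localization.AtPrime p.asIdeal))

open Module Matrix


lemma residueMapAt_eq_zero_iff {k : Type*} [CommRing k] (p : PrimeSpectrum k) (x : k) :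
    residueMapAt p x = 0 ↔ x ∈ p.asIdeal := by
  rw [residueMapAt, RingHom.comp_apply, IsLocalRing.residue_eq_zero_iff]
  exact IsLocalization.AtPrime.to_map_mem_maximal_iff _ p.asIdeal x

lemma aux_exists_indep {K : Type*} [Field K] {W : Type*} [AddCommGroup W] [Module K W]
    {J : Type*} [Finite J] (v : J → W) {n : ℕ}
    (hn : n ≤ finrank K (Submodule.span K (Set.range v))) :
    ∃ t : Fin n → J, LinearIndependent K (v ∘ t) := by
  obtain ⟨b, hbsub, hbspan, hbind⟩ := exists_linearIndependent K (Set.range v)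
  have hbfin : b.Finite := (Set.finite_range v).subset hbsub
  have : Fintype b := hbfin.fintype
  have hcard : finrank K (Submodule.span K b) = b.toFinset.card :=
    finrank_span_set_eq_card hbind
  rw [hbspan] at hcard
  have hn' : n ≤ Fintype.card b := by
    rw [← Set.toFinset_card]; omega
  obtain ⟨g⟩ : Nonempty (Fin n ↪ b) := by
    rw [Function.Embedding.nonempty_iff_card_le, Fintype.card_fin]; exact hn'
  have hmem : ∀ a : Fin n, (g a : W) ∈ Set.range v := fun a => hbsub (g a).2
  choose t ht using hmem
  refine ⟨t, ?_⟩
  have : v ∘ t = (fun x : b => (x : W)) ∘ g := funext fun a => ht a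
  rw [this]
  exact hbind.comp g g.injective

lemma rank_le_iff_minors {K : Type*} [Field K] {I J : Type*} [Fintype I] [Fintype J]
    [DecidableEq I] [DecidableEq J] (A : Matrix I J K) (r : ℕ) :
    A.rank ≤ r ↔ ∀ (s : Fin (r+1) → I) (t : Fin (r+1) → J), (A.submatrix s t).det = 0 := by
  constructor
  · intro h s t
    by_contra hdet
    have hunit : IsUnit (A.submatrix s t) :=
      (Matrix.isUnit_iff_isUnit_det _).2 (isUnit_iff_ne_zero.2 hdet)
    have hcols : LinearIndependent K (fun b => (A.submatrix s t)ᵀ b) :=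
      Matrix.linearIndependent_cols_iff_isUnit.2 hunit
    have hAt : LinearIndependent K (fun b => Aᵀ (t b)) := by
      have : (fun b => (A.submatrix s t)ᵀ b) = (LinearMap.funLeft K K s) ∘ (fun b => Aᵀ (t b)) := by
        funext b; rfl
      rw [this] at hcols
      exact hcols.of_comp _
    set W := Submodule.span K (Set.range Aᵀ) with hW
    have : FiniteDimensional K W := FiniteDimensional.span_of_finite K (Set.finite_range Aᵀ)
    have hmem : ∀ b, Aᵀ (t b) ∈ W := fun b => Submodule.subset_span ⟨t b, rfl⟩
    let u : Fin (r+1) → W := fun b => ⟨Aᵀ (t b), hmem b⟩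
    have hu : LinearIndependent K u := by
      apply LinearIndependent.of_comp W.subtype
      convert hAt
      rfl
    have hle := hu.fintype_card_le_finrank
    rw [Fintype.card_fin] at hle
    have hc : A.rank = finrank K W := rank_eq_finrank_span_cols A
    omega
  · intro h
    by_contra hlt
    push_neg at hlt
    have h1 : r + 1 ≤ finrank K (Submodule.span K (Set.range Aᵀ)) := by
      have hc : A.rank = finrank K (Submodule.span K (Set.range Aᵀ)) := rank_eq_finrank_span_cols A; omega
    obtain ⟨t, ht⟩ := aux_exists_indep Aᵀ h1
    set B := A.submatrix id t with hB
    have hrB : B.rank = r + 1 := by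
      rw [rank_eq_finrank_span_cols]
      have : B.col = Aᵀ ∘ t := by funext b; rfl
      rw [this, finrank_span_eq_card ht, Fintype.card_fin]
    have h2 : r + 1 ≤ finrank K (Submodule.span K (Set.range Bᵀᵀ)) := by
      rw [show Set.range Bᵀᵀ = Set.range Bᵀ.col from rfl, ← rank_eq_finrank_span_cols, rank_transpose, hrB]
    obtain ⟨s, hs⟩ := aux_exists_indep Bᵀᵀ h2
    have hrows : LinearIndependent K (fun a => (A.submatrix s t) a) := by
      have : (fun a => (A.submatrix s t) a) = Bᵀᵀ ∘ s := by
        funext a; funext b; rfl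
      rw [this]; exact hs
    have hdet := (Matrix.isUnit_iff_isUnit_det _).1
      (Matrix.linearIndependent_rows_iff_isUnit.1 hrows)
    exact (isUnit_iff_ne_zero.1 hdet) (h s t)
open MvPolynomial Module
-- (aux defs assumed from key.lean; re-paste)

noncomputable section AuxDefs

lemma finite_SetS {m : ℕ} (w : Fin m → ℕ) (hw : ∀ j, 0 < w j) (j : Fin m) :
    {μ : Fin m →₀ ℕ | Finsupp.weight w μ < w j}.Finite :=
  (Finsupp.finite_of_nat_weight_le w (fun x => (hw x).ne') (w j)).subset fun μ hμ => by
    simp only [Set.mem_setOf_eq] at hμ ⊢; omega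

/-- Monomials of weighted degree `< w j`. -/
def Sfin {m : ℕ} (w : Fin m → ℕ) (hw : ∀ j, 0 < w j) (j : Fin m) : Finset (Fin m →₀ ℕ) :=
  (finite_SetS w hw j).toFinset

lemma mem_Sfin {m : ℕ} {w : Fin m → ℕ} {hw : ∀ j, 0 < w j} {j : Fin m} {μ : Fin m →₀ ℕ} :
    μ ∈ Sfin w hw j ↔ Finsupp.weight w μ < w j := Set.Finite.mem_toFinset _

/-- Column index type. -/
abbrev IdxI {m : ℕ} (w : Fin m → ℕ) (hw : ∀ j, 0 < w j) : Type :=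
  Σ j : Fin m, {μ : Fin m →₀ ℕ // μ ∈ Sfin w hw j}

lemma finite_SetT {m : ℕ} (w : Fin m → ℕ) (hw : ∀ j, 0 < w j) (D : ℕ) :
    {τ : Fin m →₀ ℕ | Finsupp.weight w τ ≤ D}.Finite :=
  Finsupp.finite_of_nat_weight_le w (fun x => (hw x).ne') D

def Tfin {m : ℕ} (w : Fin m → ℕ) (hw : ∀ j, 0 < w j) (D : ℕ) : Finset (Fin m →₀ ℕ) :=
  (finite_SetT w hw D).toFinset

lemma mem_Tfin {m : ℕ} {w : Fin m → ℕ} {hw : ∀ j, 0 < w j} {D : ℕ} {τ : Fin m →₀ ℕ} :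
    τ ∈ Tfin w hw D ↔ Finsupp.weight w τ ≤ D := Set.Finite.mem_toFinset _

/-- Row index type. -/
abbrev IdxR {m : ℕ} (w : Fin m → ℕ) (hw : ∀ j, 0 < w j) (D n : ℕ) : Type :=
  Fin n × {τ : Fin m →₀ ℕ // τ ∈ Tfin w hw D}

/-- Entry of the big matrix over `k`. -/
def entryE {k : Type*} [CommRing k] {m : ℕ} (w : Fin m → ℕ) (hw : ∀ j, 0 < w j)
    {n : ℕ} (f : Fin n → MvPolynomial (Fin m) k) (i : Fin n) (τ : Fin m →₀ ℕ)
    (x : IdxI w hw) : k :=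
  coeff τ (MvPolynomial.mkDerivation k (Pi.single x.1 (monomial x.2.1 (1:k))) (f i))

def theMatrix {k : Type*} [CommRing k] {m : ℕ} (w : Fin m → ℕ) (hw : ∀ j, 0 < w j)
    (D : ℕ) {n : ℕ} (f : Fin n → MvPolynomial (Fin m) k) :
    Matrix (IdxR w hw D n) (IdxI w hw) k :=
  fun r x => entryE w hw f r.1 r.2.1 x

end AuxDefs


lemma map_mkDerivation {k K : Type*} [CommRing k] [CommRing K] (φ : k →+* K)
    {σ : Type*} (g : σ → MvPolynomial σ k) (f : MvPolynomial σ k) :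
    MvPolynomial.map φ (MvPolynomial.mkDerivation k g f)
      = MvPolynomial.mkDerivation K (fun j => MvPolynomial.map φ (g j))
          (MvPolynomial.map φ f) := by
  induction f using MvPolynomial.induction_on with
  | C a => simp
  | add f g hf hg => simp [hf, hg]
  | mul_X f i hf =>
      simp only [Derivation.leibniz, _root_.map_mul, map_add, smul_eq_mul, map_X, hf]
      simp [smul_eq_mul]

lemma mkDerivation_single_monomial {k : Type*} [CommRing k] {m : ℕ} [DecidableEq (Fin m)]
    (j : Fin m) (μ ν : Fin m →₀ ℕ) (c : k) :
    MvPolynomial.mkDerivation k (Pi.single j (monomial μ (1:k))) (monomial ν c)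
      = monomial (ν - Finsupp.single j 1 + μ) (c * ν j) := by
  rw [mkDerivation_monomial]
  rw [Finsupp.sum_eq_single j ?h1 ?h2]
  · rw [Pi.single_eq_same]
    rw [smul_eq_mul, monomial_mul, mul_one]
    rw [smul_monomial, smul_eq_mul]
  case h1 =>
    intro i _ hij
    rw [Pi.single_eq_of_ne hij, smul_zero]
  case h2 =>
    intro _
    simp

lemma support_mkDerivation_single {k : Type*} [CommRing k] {m : ℕ} {D : ℕ}
    (w : Fin m → ℕ) (j : Fin m) (μ : Fin m →₀ ℕ) (hμ : Finsupp.weight w μ < w j)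
    {f : MvPolynomial (Fin m) k} (hf : f.IsWeightedHomogeneous w D)
    {τ : Fin m →₀ ℕ}
    (hτ : τ ∈ (MvPolynomial.mkDerivation k (Pi.single j (monomial μ (1:k))) f).support) :
    Finsupp.weight w τ < D := by
  classical
  have hsum : f = ∑ ν ∈ f.support, monomial ν (coeff ν f) := (support_sum_monomial_coeff f).symm
  rw [hsum, map_sum] at hτ
  obtain ⟨ν, hν, hτ'⟩ := Finset.mem_biUnion.mp (MvPolynomial.support_sum hτ)
  rw [mkDerivation_single_monomial] at hτ'
  rw [MvPolynomial.mem_support_iff, coeff_monomial] at hτ'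
  split_ifs at hτ' with he
  · subst he
    have hνj : ν j ≠ 0 := by
      intro h0
      rw [h0] at hτ'; simp at hτ'
    have hwν : Finsupp.weight w ν = D := hf (MvPolynomial.mem_support_iff.mp hν)
    have hle : Finsupp.single j 1 ≤ ν := by
      rw [Finsupp.single_le_iff]; omega
    have hcancel : (ν - Finsupp.single j 1) + Finsupp.single j 1 = ν :=
      tsub_add_cancel_of_le hle
    have hws : Finsupp.weight w (Finsupp.single j 1) = w j := by
      rw [Finsupp.weight_apply, Finsupp.sum_single_index] <;> simp
    have hsplit : Finsupp.weight w (ν - Finsupp.single j 1) + w j = D := by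
      rw [← hws, ← map_add, hcancel, hwν]
    rw [map_add]
    omega
  · exact absurd rfl hτ'

lemma V_fg {k : Type*} [CommRing k] [IsNoetherianRing k] {m D : ℕ} (w : Fin m → ℕ)
    (hw : ∀ j, 0 < w j)
    (V : Submodule k (MvPolynomial (Fin m) k))
    (hV : ∀ f ∈ V, MvPolynomial.IsWeightedHomogeneous w f D) :
    V.FG := by
  classical
  set Tset : Set (Fin m →₀ ℕ) := {d | Finsupp.weight w d ≤ D} with hT
  have hTfin : Tset.Finite := Finsupp.finite_of_nat_weight_le w (fun x => (hw x).ne') D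
  set W : Submodule k (MvPolynomial (Fin m) k) :=
    Submodule.span k ((fun d => (monomial d (1:k) : MvPolynomial (Fin m) k)) '' Tset) with hWdef
  have hWfg : W.FG := Submodule.fg_span (hTfin.image _)
  have hVW : V ≤ W := by
    intro f hf
    rw [← support_sum_monomial_coeff f]
    apply Submodule.sum_mem
    intro ν hν
    have hmono : monomial ν (coeff ν f) = (coeff ν f) • monomial ν (1:k) := by
      rw [smul_monomial, smul_eq_mul, mul_one]
    rw [hmono]
    refine Submodule.smul_mem _ _ (Submodule.subset_span ⟨ν, ?_, rfl⟩)
    have := hV f hf (MvPolynomial.mem_support_iff.mp hν)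
    simp [Tset, this.le]
  have hNW : IsNoetherian k W := isNoetherian_of_fg_of_noetherian W hWfg
  have h1 : (V.comap W.subtype).FG := IsNoetherian.noetherian _
  have h2 : Submodule.map W.subtype (V.comap W.subtype) = V := by
    rw [Submodule.map_comap_subtype]
    exact inf_eq_right.mpr hVW
  rw [← h2]
  exact h1.map _


set_option maxHeartbeats 2000000 in
lemma key_rank {k K : Type*} [CommRing k] [Field K] (φ : k →+* K) {m D n : ℕ}
    (w : Fin m → ℕ) (hw : ∀ j, 0 < w j)
    (V : Submodule k (MvPolynomial (Fin m) k))
    (hV : ∀ g ∈ V, MvPolynomial.IsWeightedHomogeneous w g D)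
    (f : Fin n → MvPolynomial (Fin m) k)
    (hfspan : Submodule.span k (Set.range f) = V)
    (L : Submodule K (Derivation K (MvPolynomial (Fin m) K) (MvPolynomial (Fin m) K)))
    (hL : ∀ der : Derivation K (MvPolynomial (Fin m) K) (MvPolynomial (Fin m) K),
        der ∈ L ↔ ((∀ j : Fin m, weightedTotalDegree w (der (X j)) < w j) ∧
          ∀ g ∈ Submodule.span K ((MvPolynomial.map φ) '' (V : Set (MvPolynomial (Fin m) k))),
            der g = 0)) :
    Module.finrank K L + ((theMatrix w hw D f).map φ).rank = Fintype.card (IdxI w hw) := by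
  classical
  set A := (theMatrix w hw D f).map φ with hA
  set Φ := A.mulVecLin with hΦ
  -- the linear parametrization of candidate direction vectors
  set gK : (IdxI w hw → K) → (Fin m → MvPolynomial (Fin m) K) :=
    fun c j => ∑ μ : {μ : Fin m →₀ ℕ // μ ∈ Sfin w hw j}, c ⟨j, μ⟩ • monomial μ.1 (1:K)
    with hgK
  have gK_add : ∀ c d, gK (c + d) = gK c + gK d := by
    intro c d; funext j
    simp [hgK, add_smul, Finset.sum_add_distrib]
  have gK_smul : ∀ (a : K) c, gK (a • c) = a • gK c := by
    intro a c; funext j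
    simp [hgK, Finset.smul_sum, smul_smul]
  set gKlin : (IdxI w hw → K) →ₗ[K] (Fin m → MvPolynomial (Fin m) K) :=
    { toFun := gK, map_add' := gK_add, map_smul' := gK_smul } with hgKlin
  set Θ : (IdxI w hw → K) →ₗ[K]
      Derivation K (MvPolynomial (Fin m) K) (MvPolynomial (Fin m) K) :=
    (mkDerivationEquiv K).toLinearMap ∘ₗ gKlin with hΘ
  have Θ_apply : ∀ c, Θ c = MvPolynomial.mkDerivation K (gK c) := fun c => rfl
  have Θ_X : ∀ c j, Θ c (X j) = gK c j := by
    intro c j; rw [Θ_apply, mkDerivation_X]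
  -- support of gK c j
  have gK_supp : ∀ c j, (gK c j).support ⊆ Sfin w hw j := by
    intro c j
    refine (MvPolynomial.support_sum).trans ?_
    intro τ hτ
    obtain ⟨μ, -, hμ⟩ := Finset.mem_biUnion.mp hτ
    have h1 : (c ⟨j, μ⟩ • monomial μ.1 (1:K)).support ⊆ {μ.1} := by
      rw [smul_monomial]
      exact MvPolynomial.support_monomial_subset
    have := h1 hμ
    rw [Finset.mem_singleton] at this
    exact this ▸ μ.2
  have gK_deg : ∀ c j, weightedTotalDegree w (gK c j) < w j := by
    intro c j
    rw [weightedTotalDegree]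
    rw [Finset.sup_lt_iff (by exact hw j)]
    intro τ hτ
    exact mem_Sfin.mp (gK_supp c j hτ)
  -- coefficient extraction from gK
  have gK_coeff : ∀ c j (μh : {μ : Fin m →₀ ℕ // μ ∈ Sfin w hw j}),
      coeff μh.1 (gK c j) = c ⟨j, μh⟩ := by
    intro c j μh
    simp only [hgK]
    rw [MvPolynomial.coeff_sum]
    have hterm : ∀ μ' : {μ : Fin m →₀ ℕ // μ ∈ Sfin w hw j},
        coeff μh.1 (c ⟨j, μ'⟩ • monomial μ'.1 (1:K)) = if μ' = μh then c ⟨j, μh⟩ else 0 := by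
      intro μ'
      rw [smul_monomial, smul_eq_mul, mul_one, coeff_monomial]
      by_cases h : μ' = μh
      · subst h; simp
      · rw [if_neg (fun hh => h (Subtype.ext hh)), if_neg h]
    rw [Finset.sum_congr rfl (fun μ' _ => hterm μ'), Finset.sum_ite_eq' Finset.univ μh,
      if_pos (Finset.mem_univ _)]
  have hfV : ∀ i, f i ∈ V := fun i => hfspan ▸ Submodule.subset_span ⟨i, rfl⟩
  have hmapsingle : ∀ (j : Fin m) (μ : Fin m →₀ ℕ),
      (fun j' => MvPolynomial.map φ ((Pi.single j (monomial μ (1:k)) : Fin m → MvPolynomial (Fin m) k) j'))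
        = Pi.single j (monomial μ (1:K)) := by
    intro j μ; funext j'
    by_cases h : j' = j
    · subst h; simp [Pi.single_eq_same, map_monomial]
    · simp [Pi.single_eq_of_ne h]
  have gK_single : ∀ x : IdxI w hw,
      gK (fun y => if x = y then (1:K) else 0) = Pi.single x.1 (monomial x.2.1 (1:K)) := by
    rintro ⟨j, μ⟩
    funext j'
    by_cases h : j' = j
    · subst h
      rw [Pi.single_eq_same]
      simp only [hgK]
      rw [Finset.sum_eq_single μ]
      · rw [if_pos rfl, one_smul]
      · intro μ' _ hne
        rw [if_neg, zero_smul]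
        intro he
        injection he with h1 h2
        exact hne h2.symm
      · intro hh; exact absurd (Finset.mem_univ _) hh
    · rw [Pi.single_eq_of_ne h]
      simp only [hgK]
      apply Finset.sum_eq_zero
      intro μ' _
      rw [if_neg, zero_smul]
      intro he
      injection he with h1 h2
      exact h h1.symm
  have hΘq : ∀ (c : IdxI w hw → K) (i : Fin n),
      Θ c (MvPolynomial.map φ (f i)) = ∑ x : IdxI w hw, c x •
        MvPolynomial.map φ
          (MvPolynomial.mkDerivation k (Pi.single x.1 (monomial x.2.1 (1:k))) (f i)) := by
    intro c i
    set q := MvPolynomial.map φ (f i) with hq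
    let ev : Derivation K (MvPolynomial (Fin m) K) (MvPolynomial (Fin m) K)
        →ₗ[K] MvPolynomial (Fin m) K :=
      { toFun := fun d => d q,
        map_add' := fun a b => by simp,
        map_smul' := fun a b => by simp }
    have h1 : Θ c q = (ev ∘ₗ Θ) c := rfl
    rw [h1, LinearMap.pi_apply_eq_sum_univ (ev ∘ₗ Θ) c]
    apply Finset.sum_congr rfl
    intro x _
    congr 1
    show Θ (fun y => if x = y then (1:K) else 0) q = _
    rw [Θ_apply, gK_single x]
    rw [map_mkDerivation φ _ (f i), hmapsingle]
  have coeff_Θ : ∀ (c : IdxI w hw → K) (i : Fin n) (τ : Fin m →₀ ℕ),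
      coeff τ (Θ c (MvPolynomial.map φ (f i)))
        = ∑ x : IdxI w hw, c x * φ (entryE w hw f i τ x) := by
    intro c i τ
    rw [hΘq]
    rw [MvPolynomial.coeff_sum]
    apply Finset.sum_congr rfl
    intro x _
    rw [MvPolynomial.coeff_smul, MvPolynomial.coeff_map, smul_eq_mul]
    rfl
  have Φ_apply : ∀ c (r : IdxR w hw D n),
      Φ c r = ∑ x : IdxI w hw, φ (entryE w hw f r.1 r.2.1 x) * c x := by
    intro c r
    simp [hΦ, Matrix.mulVecLin_apply, Matrix.mulVec, dotProduct, hA,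
      Matrix.map_apply, theMatrix]
  have vanish : ∀ c (i : Fin n), Θ c (MvPolynomial.map φ (f i)) = 0
      ↔ ∀ τh : {τ : Fin m →₀ ℕ // τ ∈ Tfin w hw D}, Φ c (i, τh) = 0 := by
    intro c i
    constructor
    · intro h τh
      rw [Φ_apply]
      have hco := congrArg (coeff τh.1) h
      rw [coeff_Θ, coeff_zero] at hco
      rw [← hco]
      exact Finset.sum_congr rfl fun x _ => mul_comm _ _
    · intro h
      apply MvPolynomial.ext
      intro τ
      rw [coeff_Θ, coeff_zero]
      by_cases hτ : τ ∈ Tfin w hw D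
      · have hh := h ⟨τ, hτ⟩
        rw [Φ_apply] at hh
        rw [← hh]
        exact Finset.sum_congr rfl fun x _ => mul_comm _ _
      · apply Finset.sum_eq_zero
        intro x _
        have hE : entryE w hw f i τ x = 0 := by
          by_contra hne
          have hsupp : τ ∈ (MvPolynomial.mkDerivation k
              (Pi.single x.1 (monomial x.2.1 (1:k))) (f i)).support :=
            MvPolynomial.mem_support_iff.mpr hne
          have hwt := support_mkDerivation_single w x.1 x.2.1 (mem_Sfin.mp x.2.2)
            (hV (f i) (hfV i)) hsupp
          exact hτ (mem_Tfin.mpr hwt.le)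
        rw [hE, map_zero, mul_zero]
  have himg : Submodule.span K ((MvPolynomial.map φ) '' (V : Set (MvPolynomial (Fin m) k)))
      = Submodule.span K (Set.range fun i => MvPolynomial.map φ (f i)) := by
    apply le_antisymm
    · rw [Submodule.span_le]
      rintro _ ⟨v, hv, rfl⟩
      rw [← hfspan] at hv
      induction hv using Submodule.span_induction with
      | mem x hx => obtain ⟨i, rfl⟩ := hx; exact Submodule.subset_span ⟨i, rfl⟩
      | zero => rw [map_zero]; exact Submodule.zero_mem _
      | add x y hx hy ihx ihy => rw [map_add]; exact Submodule.add_mem _ ihx ihy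
      | smul a x hx ih =>
          have hsm : MvPolynomial.map φ (a • x) = φ a • MvPolynomial.map φ x := by
            rw [MvPolynomial.smul_eq_C_mul, _root_.map_mul, MvPolynomial.map_C,
              ← MvPolynomial.smul_eq_C_mul]
          rw [hsm]
          exact Submodule.smul_mem _ _ ih
    · rw [Submodule.span_le]
      rintro _ ⟨i, rfl⟩
      exact Submodule.subset_span ⟨f i, hfV i, rfl⟩
  have hvanishspan : ∀ (dd : Derivation K (MvPolynomial (Fin m) K) (MvPolynomial (Fin m) K)),
      (∀ g ∈ Submodule.span K ((MvPolynomial.map φ) '' (V : Set (MvPolynomial (Fin m) k))),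
        dd g = 0) ↔ ∀ i, dd (MvPolynomial.map φ (f i)) = 0 := by
    intro dd
    constructor
    · intro h i
      apply h
      rw [himg]
      exact Submodule.subset_span ⟨i, rfl⟩
    · intro h g hg
      rw [himg] at hg
      induction hg using Submodule.span_induction with
      | mem x hx => obtain ⟨i, rfl⟩ := hx; exact h i
      | zero => rw [map_zero]
      | add x y hx hy ihx ihy => rw [map_add, ihx, ihy, add_zero]
      | smul a x hx ih => rw [Derivation.map_smul, ih, smul_zero]
  have mem_iff : ∀ c, Θ c ∈ L ↔ Φ c = 0 := by
    intro c
    rw [hL]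
    constructor
    · rintro ⟨-, h2⟩
      have h3 := (hvanishspan _).mp h2
      funext r
      obtain ⟨i, τh⟩ := r
      have := (vanish c i).mp (h3 i) τh
      simpa using this
    · intro h
      refine ⟨fun j => by rw [Θ_X]; exact gK_deg c j, (hvanishspan _).mpr ?_⟩
      intro i
      rw [vanish c i]
      intro τh
      rw [h]
      rfl
  let toL : LinearMap.ker Φ →ₗ[K] L :=
    LinearMap.codRestrict L (Θ ∘ₗ (LinearMap.ker Φ).subtype)
      (fun c => (mem_iff c.1).mpr (LinearMap.mem_ker.mp c.2))
  have hinj : Function.Injective toL := by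
    intro c d hcd
    have h0 : Θ c.1 = Θ d.1 := congrArg Subtype.val hcd
    apply Subtype.ext
    funext x
    obtain ⟨j, μh⟩ := x
    have hco := congrArg (fun dd : Derivation K (MvPolynomial (Fin m) K)
      (MvPolynomial (Fin m) K) => coeff μh.1 (dd (X j))) h0
    simpa [Θ_X, gK_coeff] using hco
  have hsurj : Function.Surjective toL := by
    rintro ⟨der, hder⟩
    obtain ⟨hdeg, hvan⟩ := (hL der).mp hder
    set c : IdxI w hw → K := fun x => coeff x.2.1 (der (X x.1)) with hc
    have hΘc : Θ c = der := by
      apply MvPolynomial.derivation_ext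
      intro j
      rw [Θ_X]
      have hsupp : (der (X j)).support ⊆ Sfin w hw j := by
        intro τ hτ
        rw [mem_Sfin]
        have hle : Finsupp.weight w τ ≤ weightedTotalDegree w (der (X j)) := by
          unfold weightedTotalDegree
          exact Finset.le_sup hτ
        exact lt_of_le_of_lt hle (hdeg j)
      have hform : gK c j = ∑ μ ∈ (Sfin w hw j).attach,
          monomial μ.1 (coeff μ.1 (der (X j))) := by
        simp only [hgK, Finset.univ_eq_attach]
        apply Finset.sum_congr rfl
        intro μ _
        rw [smul_monomial, smul_eq_mul, mul_one]
      rw [hform, Finset.sum_attach (Sfin w hw j)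
        (fun μ => monomial μ (coeff μ (der (X j))))]
      rw [← Finset.sum_subset hsupp
        (fun τ _ hτ => by rw [MvPolynomial.notMem_support_iff.mp hτ, map_zero])]
      exact support_sum_monomial_coeff _
    refine ⟨⟨c, ?_⟩, ?_⟩
    · rw [LinearMap.mem_ker]
      exact (mem_iff c).mp (hΘc ▸ hder)
    · apply Subtype.ext
      exact hΘc
  have e : (LinearMap.ker Φ) ≃ₗ[K] L := LinearEquiv.ofBijective toL ⟨hinj, hsurj⟩
  have h1 : finrank K L = finrank K (LinearMap.ker Φ) := (LinearEquiv.finrank_eq e).symm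
  have h2 := LinearMap.finrank_range_add_finrank_ker Φ
  rw [Module.finrank_fintype_fun_eq_card] at h2
  have h3 : A.rank = finrank K (LinearMap.range Φ) := rfl
  rw [h1, h3]
  omega


/-- **Paper's Fact V.i**: upper semicontinuity of the dimension of the space of
negative-weight vector fields annihilating `V`.  Let `k` be a Noetherian commutative ring of
characteristic zero, `w₁,…,w_m` positive integer weights, and `V` a `k`-submodule of the
weighted-homogeneous degree-`D` part of `k[x₁,…,x_m]`.  For a prime `p`, let `λ p` be the
`κ(p)`-dimension of the space of `κ(p)`-linear derivations `∂` with each `∂ xⱼ` a combination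
of monomials of weighted degree `< wⱼ` and `∂ f = 0` for every `f` in the `κ(p)`-span `V_p` of
the image of `V`.  Then `p ↦ λ p` is upper semicontinuous on `Spec k`. -/
theorem fact_V_i (k : Type*) [CommRing k] [IsNoetherianRing k] [CharZero k]
    (m D : ℕ) (hm : 1 ≤ m) (hD : 1 ≤ D)
    (w : Fin m → ℕ) (hw : ∀ j, 0 < w j)
    (V : Submodule k (MvPolynomial (Fin m) k))
    (hV : ∀ f ∈ V, MvPolynomial.IsWeightedHomogeneous w f D)
    (lam : PrimeSpectrum k → ℕ)
    (hlam : ∀ p : PrimeSpectrum k,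
      ∃ L : Submodule (ResidueFieldAt p)
          (Derivation (ResidueFieldAt p) (MvPolynomial (Fin m) (ResidueFieldAt p))
            (MvPolynomial (Fin m) (ResidueFieldAt p))),
        (∀ der : Derivation (ResidueFieldAt p) (MvPolynomial (Fin m) (ResidueFieldAt p))
            (MvPolynomial (Fin m) (ResidueFieldAt p)), der ∈ L ↔
          ((∀ j : Fin m,
              MvPolynomial.weightedTotalDegree w (der (MvPolynomial.X j)) < w j) ∧
            ∀ f ∈ Submodule.span (ResidueFieldAt p)
              ((MvPolynomial.map (residueMapAt p)) '' (V : Set (MvPolynomial (Fin m) k))),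
              der f = 0)) ∧
        lam p = Module.finrank (ResidueFieldAt p) L) :
    ∀ ℓ : ℕ, IsClosed {p : PrimeSpectrum k | ℓ ≤ lam p} := by
  classical
  obtain ⟨n, f, hfspan⟩ := Submodule.fg_iff_exists_fin_generating_family.mp (V_fg w hw V hV)
  intro ℓ
  set M := theMatrix w hw D f with hM
  set N := Fintype.card (IdxI w hw) with hN
  have key : ∀ p : PrimeSpectrum k,
      lam p + ((M.map (residueMapAt p)).rank) = N := by
    intro p
    obtain ⟨L, hL, hlamp⟩ := hlam p
    rw [hlamp]
    exact key_rank (residueMapAt p) w hw V hV f hfspan L hL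
  have hrankdet : ∀ (p : PrimeSpectrum k) (s : Fin (N - ℓ + 1) → IdxR w hw D n)
      (t : Fin (N - ℓ + 1) → IdxI w hw),
      ((M.map (residueMapAt p)).submatrix s t).det
        = residueMapAt p (M.submatrix s t).det := by
    intro p s t
    rw [Matrix.submatrix_map, RingHom.map_det, RingHom.mapMatrix_apply]
  by_cases hlN : ℓ ≤ N
  · have hset : {p : PrimeSpectrum k | ℓ ≤ lam p} = PrimeSpectrum.zeroLocus
        {x : k | ∃ (s : Fin (N - ℓ + 1) → IdxR w hw D n) (t : Fin (N - ℓ + 1) → IdxI w hw),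
          x = (M.submatrix s t).det} := by
      ext p
      simp only [Set.mem_setOf_eq, PrimeSpectrum.mem_zeroLocus]
      constructor
      · intro hp
        rintro x ⟨s, t, rfl⟩
        show (M.submatrix s t).det ∈ p.asIdeal
        rw [← residueMapAt_eq_zero_iff, ← hrankdet p s t]
        have hrank : (M.map (residueMapAt p)).rank ≤ N - ℓ := by
          have := key p; omega
        exact (rank_le_iff_minors _ (N - ℓ)).mp hrank s t
      · intro hp
        have hdets : ∀ (s : Fin (N - ℓ + 1) → IdxR w hw D n)
            (t : Fin (N - ℓ + 1) → IdxI w hw),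
            ((M.map (residueMapAt p)).submatrix s t).det = 0 := by
          intro s t
          rw [hrankdet p s t, residueMapAt_eq_zero_iff]
          exact hp ⟨s, t, rfl⟩
        have hrank := (rank_le_iff_minors _ (N - ℓ)).mpr hdets
        have := key p; omega
    rw [hset]
    exact PrimeSpectrum.isClosed_zeroLocus _
  · have hset : {p : PrimeSpectrum k | ℓ ≤ lam p} = ∅ := by
      ext p
      simp only [Set.mem_setOf_eq, Set.mem_empty_iff_false, iff_false, not_le]
      have := key p; omega
    rw [hset]
    exact isClosed_empty
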